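/- Let (g_n(x))_{n≥0} be real polynomials such that deg g_n = n and each g_n is γ-positive with center n/2, and let (M_{i,j})_{i,j≥0} be nonnegative reals. Define f_0(x) = 1 and, for n ≥ 0, f_{n+1}(x) = Σ_{i=0}^{n} M_{n,i} · g_{n−i}(x) · (R_i f_i)(x), where R_i f_i denotes x^i f_i(1/x) (the reflection of f_i in degree i; inductively deg f_i ≤ i so this is a polynomial). Then for every n ≥ 0, f_{n+1} is bi-γ-positive with respect to degree n: f_{n+1}(x) = a(x) + x·b(x) where a is γ-positive with center n/2 and satisfies x^n·a(1/x) = a(x), and b is γ-positive with center (n−1)/2 and satisfies x^{n−1}·b(1/x) = b(x). In particular, each f_n is unimodal. -/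
import Mathlib


open Finset Polynomial

/-- `f` is `γ`-positive with center `m/2`: there are nonnegative reals `γ_0,…,γ_{⌊m/2⌋}`
with `f(x) = Σ_k γ_k x^k (1+x)^{m-2k}`. -/
def IsGammaPos (f : Polynomial ℝ) (m : ℕ) : Prop :=
  ∃ γ : ℕ → ℝ, (∀ k, 0 ≤ γ k) ∧
    f = ∑ k ∈ Finset.range (m / 2 + 1), C (γ k) * X ^ k * (1 + X) ^ (m - 2 * k)

lemma gp_zero (m : ℕ) : IsGammaPos 0 m :=
  ⟨fun _ => 0, fun _ => le_refl 0, by simp⟩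

lemma gp_add {p q : Polynomial ℝ} {m : ℕ} (hp : IsGammaPos p m) (hq : IsGammaPos q m) :
    IsGammaPos (p + q) m := by
  obtain ⟨γ, hγ, rfl⟩ := hp
  obtain ⟨δ, hδ, rfl⟩ := hq
  refine ⟨fun k => γ k + δ k, fun k => add_nonneg (hγ k) (hδ k), ?_⟩
  rw [← Finset.sum_add_distrib]
  exact Finset.sum_congr rfl fun k _ => by rw [C_add]; ring

lemma gp_sum {ι : Type*} (s : Finset ι) (F : ι → Polynomial ℝ) (m : ℕ)
    (h : ∀ i ∈ s, IsGammaPos (F i) m) : IsGammaPos (∑ i ∈ s, F i) m :=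
  Finset.sum_induction F (fun p => IsGammaPos p m) (fun _ _ ha hb => gp_add ha hb)
    (gp_zero m) h

lemma gp_single {c : ℝ} (hc : 0 ≤ c) {k m : ℕ} (hk : k ≤ m / 2) :
    IsGammaPos (C c * X ^ k * (1 + X) ^ (m - 2 * k)) m := by
  refine ⟨fun j => if j = k then c else 0, fun j => by dsimp only; split <;> simp [hc], ?_⟩
  rw [Finset.sum_eq_single k]
  · simp
  · intro b _ hb; simp [hb]
  · intro h; exact absurd (Finset.mem_range.mpr (by omega)) h

lemma gp_mul {p q : Polynomial ℝ} {m l : ℕ} (hp : IsGammaPos p m) (hq : IsGammaPos q l) :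
    IsGammaPos (p * q) (m + l) := by
  obtain ⟨γ, hγ, rfl⟩ := hp
  obtain ⟨δ, hδ, rfl⟩ := hq
  rw [Finset.sum_mul_sum]
  apply gp_sum
  intro k hk
  apply gp_sum
  intro j hj
  have hk2 : 2 * k ≤ m := by have := Finset.mem_range.mp hk; omega
  have hj2 : 2 * j ≤ l := by have := Finset.mem_range.mp hj; omega
  have e : C (γ k) * X ^ k * (1 + X) ^ (m - 2 * k) * (C (δ j) * X ^ j * (1 + X) ^ (l - 2 * j))
      = C (γ k * δ j) * X ^ (k + j) * (1 + X) ^ ((m + l) - 2 * (k + j)) := by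
    rw [show (m + l) - 2 * (k + j) = (m - 2 * k) + (l - 2 * j) by omega]
    rw [C_mul, pow_add, pow_add]; ring
  rw [e]
  exact gp_single (mul_nonneg (hγ k) (hδ j)) (by omega)

lemma gp_C {c : ℝ} (hc : 0 ≤ c) : IsGammaPos (C c) 0 := by
  have := gp_single hc (k := 0) (m := 0) (le_refl _)
  simpa using this

lemma gp_one : IsGammaPos 1 0 := by
  have := gp_C (c := 1) zero_le_one
  simpa using this

lemma gp_X : IsGammaPos X 2 := by
  have := gp_single (c := 1) zero_le_one (k := 1) (m := 2) (by norm_num)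
  simpa using this

lemma natDegree_one_add_X_pow_le (d : ℕ) : (((1 : Polynomial ℝ) + X) ^ d).natDegree ≤ d := by
  have h1 : ((1 : Polynomial ℝ) + X).natDegree ≤ 1 := by
    simpa using natDegree_add_le (1 : Polynomial ℝ) X
  calc (((1 : Polynomial ℝ) + X) ^ d).natDegree ≤ d * ((1 : Polynomial ℝ) + X).natDegree :=
        natDegree_pow_le
    _ ≤ d * 1 := Nat.mul_le_mul_left d h1
    _ = d := mul_one d

lemma gp_natDegree_le {p : Polynomial ℝ} {m : ℕ} (hp : IsGammaPos p m) : p.natDegree ≤ m := by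
  obtain ⟨γ, hγ, rfl⟩ := hp
  apply natDegree_sum_le_of_forall_le
  intro k hk
  have hk2 : 2 * k ≤ m := by have := Finset.mem_range.mp hk; omega
  calc (C (γ k) * X ^ k * (1 + X) ^ (m - 2 * k)).natDegree
      ≤ (C (γ k) * X ^ k).natDegree + (((1 : Polynomial ℝ) + X) ^ (m - 2 * k)).natDegree :=
        natDegree_mul_le
    _ ≤ k + (m - 2 * k) := add_le_add ((natDegree_C_mul_le _ _).trans (by simp))
        (natDegree_one_add_X_pow_le _)
    _ ≤ m := by omega

lemma reflect_sum' {ι : Type*} (s : Finset ι) (F : ι → Polynomial ℝ) (N : ℕ) :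
    reflect N (∑ i ∈ s, F i) = ∑ i ∈ s, reflect N (F i) := by
  ext j
  simp [coeff_reflect, finset_sum_coeff]

lemma reflect_one_add_X_pow (d : ℕ) :
    reflect d (((1 : Polynomial ℝ) + X) ^ d) = (1 + X) ^ d := by
  induction d with
  | zero => simp
  | succ d ih =>
    have h1 : ((1 : Polynomial ℝ) + X).natDegree ≤ 1 := by
      simpa using natDegree_add_le (1 : Polynomial ℝ) X
    have h2 := natDegree_one_add_X_pow_le d
    calc reflect (d + 1) (((1 : Polynomial ℝ) + X) ^ (d + 1))
        = reflect (1 + d) (((1 : Polynomial ℝ) + X) * (1 + X) ^ d) := by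
          rw [pow_succ', add_comm d 1]
      _ = reflect 1 ((1 : Polynomial ℝ) + X) * reflect d (((1 : Polynomial ℝ) + X) ^ d) :=
          reflect_mul _ _ h1 h2
      _ = ((1 : Polynomial ℝ) + X) ^ (d + 1) := by
          rw [ih, reflect_add, reflect_one_X]
          have : reflect 1 (1 : Polynomial ℝ) = X := by
            simpa using reflect_C (1 : ℝ) 1
          rw [this, pow_succ]
          ring

lemma gp_reflect {p : Polynomial ℝ} {m : ℕ} (hp : IsGammaPos p m) : reflect m p = p := by
  obtain ⟨γ, hγ, rfl⟩ := hp
  rw [reflect_sum']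
  refine Finset.sum_congr rfl fun k hk => ?_
  have hk2 : 2 * k ≤ m := by have := Finset.mem_range.mp hk; omega
  have hd1 : (C (γ k) * X ^ k).natDegree ≤ 2 * k :=
    (natDegree_C_mul_le _ _).trans (by simp; omega)
  have hd2 := natDegree_one_add_X_pow_le (m - 2 * k)
  calc reflect m (C (γ k) * X ^ k * (1 + X) ^ (m - 2 * k))
      = reflect (2 * k + (m - 2 * k)) (C (γ k) * X ^ k * (1 + X) ^ (m - 2 * k)) := by
        rw [show 2 * k + (m - 2 * k) = m by omega]
    _ = reflect (2 * k) (C (γ k) * X ^ k) * reflect (m - 2 * k) ((1 + X) ^ (m - 2 * k)) :=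
        reflect_mul _ _ hd1 hd2
    _ = C (γ k) * X ^ k * (1 + X) ^ (m - 2 * k) := by
        rw [reflect_C_mul_X_pow, revAt_le (by omega : k ≤ 2 * k),
          show 2 * k - k = k by omega, reflect_one_add_X_pow]

lemma gp_coeff_term (c : ℝ) (k d i : ℕ) :
    (C c * X ^ k * (1 + X) ^ d).coeff i =
      if k ≤ i then c * (d.choose (i - k) : ℝ) else 0 := by
  have e : C c * X ^ k * ((1 : Polynomial ℝ) + X) ^ d = C c * ((1 + X) ^ d * X ^ k) := by ring
  rw [e, coeff_C_mul, coeff_mul_X_pow', coeff_one_add_X_pow, mul_ite, mul_zero]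

lemma gp_coeff_nonneg {p : Polynomial ℝ} {m : ℕ} (hp : IsGammaPos p m) (i : ℕ) :
    0 ≤ p.coeff i := by
  obtain ⟨γ, hγ, rfl⟩ := hp
  rw [finset_sum_coeff]
  apply Finset.sum_nonneg
  intro k _
  rw [gp_coeff_term]
  split
  · exact mul_nonneg (hγ k) (Nat.cast_nonneg _)
  · exact le_refl 0

lemma choose_inc {d j : ℕ} (h : 2 * j + 1 ≤ d) : d.choose j ≤ d.choose (j + 1) := by
  rcases lt_or_ge j (d / 2) with h1 | h1
  · exact Nat.choose_le_succ_of_lt_half_left h1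
  · have hd : d = 2 * j + 1 := by omega
    subst hd
    have hs := Nat.choose_symm (n := 2 * j + 1) (k := j + 1) (by omega)
    rw [show 2 * j + 1 - (j + 1) = j by omega] at hs
    exact le_of_eq hs

lemma choose_dec {d j : ℕ} (h : d ≤ 2 * j + 1) : d.choose (j + 1) ≤ d.choose j := by
  rcases le_or_gt d j with h1 | h1
  · rw [Nat.choose_eq_zero_of_lt (by omega)]
    exact Nat.zero_le _
  · have h2 : j + 1 ≤ d := h1
    have s1 := Nat.choose_symm (n := d) (k := j + 1) h2
    have s2 := Nat.choose_symm (n := d) (k := j) (le_of_lt h1)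
    have e : d - j = (d - (j + 1)) + 1 := by omega
    calc d.choose (j + 1) = d.choose (d - (j + 1)) := s1.symm
      _ ≤ d.choose ((d - (j + 1)) + 1) := choose_inc (by omega)
      _ = d.choose (d - j) := by rw [← e]
      _ = d.choose j := s2

lemma gp_coeff_mono {p : Polynomial ℝ} {m : ℕ} (hp : IsGammaPos p m) {i : ℕ}
    (h : 2 * i + 1 ≤ m) : p.coeff i ≤ p.coeff (i + 1) := by
  obtain ⟨γ, hγ, rfl⟩ := hp
  rw [finset_sum_coeff, finset_sum_coeff]
  apply Finset.sum_le_sum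
  intro k hk
  have hk2 : 2 * k ≤ m := by have := Finset.mem_range.mp hk; omega
  rw [gp_coeff_term, gp_coeff_term]
  by_cases h1 : k ≤ i
  · rw [if_pos h1, if_pos (by omega)]
    apply mul_le_mul_of_nonneg_left _ (hγ k)
    rw [show i + 1 - k = (i - k) + 1 by omega]
    exact_mod_cast choose_inc (by omega)
  · rw [if_neg h1]
    split
    · exact mul_nonneg (hγ k) (Nat.cast_nonneg _)
    · exact le_refl 0

lemma gp_coeff_anti {p : Polynomial ℝ} {m : ℕ} (hp : IsGammaPos p m) {i : ℕ}
    (h : m ≤ 2 * i + 1) : p.coeff (i + 1) ≤ p.coeff i := by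
  obtain ⟨γ, hγ, rfl⟩ := hp
  rw [finset_sum_coeff, finset_sum_coeff]
  apply Finset.sum_le_sum
  intro k hk
  have hk2 : 2 * k ≤ m := by have := Finset.mem_range.mp hk; omega
  have h1 : k ≤ i := by omega
  rw [gp_coeff_term, gp_coeff_term, if_pos h1, if_pos (by omega)]
  apply mul_le_mul_of_nonneg_left _ (hγ k)
  rw [show i + 1 - k = (i - k) + 1 by omega]
  exact_mod_cast choose_dec (by omega)

lemma reflect_succ_of_natDegree_le {p : Polynomial ℝ} {j : ℕ} (h : p.natDegree ≤ j) :
    reflect (j + 1) p = X * reflect j p := by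
  have h1 : reflect (1 + j) ((1 : Polynomial ℝ) * p) = reflect 1 1 * reflect j p :=
    reflect_mul 1 p (by simp) h
  rw [one_mul, add_comm 1 j] at h1
  rw [h1]
  have : reflect 1 (1 : Polynomial ℝ) = X := by simpa using reflect_C (1 : ℝ) 1
  rw [this]

lemma key_lemma (g : ℕ → Polynomial ℝ) (hgpos : ∀ n, IsGammaPos (g n) n)
    (M : ℕ → ℕ → ℝ) (hM : ∀ i j, 0 ≤ M i j)
    (f : ℕ → Polynomial ℝ) (hf0 : f 0 = 1)
    (hfrec : ∀ n, f (n + 1) =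
      ∑ i ∈ Finset.range (n + 1), C (M n i) * g (n - i) * reflect i (f i)) :
    ∀ n : ℕ, ∃ a b : Polynomial ℝ,
      f (n + 1) = a + X * b ∧ IsGammaPos a n ∧ IsGammaPos b (n - 1) ∧ (n = 0 → b = 0) := by
  intro n
  induction n using Nat.strong_induction_on with
  | _ n IH =>
  obtain ⟨a, b, hab⟩ : ∃ a b : ℕ → Polynomial ℝ, ∀ j, j < n →
      f (j + 1) = a j + X * b j ∧ IsGammaPos (a j) j ∧ IsGammaPos (b j) (j - 1) ∧
      (j = 0 → b j = 0) := by
    choose a b h1 h2 h3 h4 using IH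
    exact ⟨fun j => if h : j < n then a j h else 0, fun j => if h : j < n then b j h else 0,
      fun j hj => by simp only [dif_pos hj]; exact ⟨h1 j hj, h2 j hj, h3 j hj, h4 j hj⟩⟩
  have hrefl : ∀ j, j < n → reflect (j + 1) (f (j + 1)) = X * a j + X * b j := by
    intro j hj
    obtain ⟨he, hga, hgb, hb0⟩ := hab j hj
    have hda : (a j).natDegree ≤ j := gp_natDegree_le hga
    rw [he, reflect_add]
    have hA : reflect (j + 1) (a j) = X * a j := by
      rw [reflect_succ_of_natDegree_le hda, gp_reflect hga]
    have hB : reflect (j + 1) (X * b j) = X * b j := by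
      rcases Nat.eq_zero_or_pos j with rfl | hjpos
      · rw [hb0 rfl]; simp
      · obtain ⟨j', rfl⟩ : ∃ j', j = j' + 1 := ⟨j - 1, by omega⟩
        have hdb : (b (j' + 1)).natDegree ≤ j' := by
          have := gp_natDegree_le hgb; simpa using this
        have hrb : reflect j' (b (j' + 1)) = b (j' + 1) := by
          have := gp_reflect hgb; simpa using this
        have hX : reflect ((j' + 1) + 1) (X * b (j' + 1)) =
            reflect 1 X * reflect (j' + 1) (b (j' + 1)) := by
          have := reflect_mul (X : Polynomial ℝ) (b (j' + 1))
            (F := 1) (G := j' + 1) natDegree_X_le (by omega)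
          rwa [add_comm 1 (j' + 1)] at this
        rw [hX, reflect_one_X, one_mul, reflect_succ_of_natDegree_le hdb, hrb]
    rw [hA, hB]
  refine ⟨C (M n 0) * g n + ∑ j ∈ Finset.range n, C (M n (j + 1)) * (X * (g (n - 1 - j) * b j)),
          ∑ j ∈ Finset.range n, C (M n (j + 1)) * (g (n - 1 - j) * a j), ?_, ?_, ?_, ?_⟩
  · rw [hfrec n, Finset.sum_range_succ']
    have hT0 : C (M n 0) * g (n - 0) * reflect 0 (f 0) = C (M n 0) * g n := by
      rw [hf0]
      simp
    rw [hT0]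
    have hTj : ∀ j ∈ Finset.range n,
        C (M n (j + 1)) * g (n - (j + 1)) * reflect (j + 1) (f (j + 1))
        = C (M n (j + 1)) * (X * (g (n - 1 - j) * b j))
          + X * (C (M n (j + 1)) * (g (n - 1 - j) * a j)) := by
      intro j hj
      have hj' := Finset.mem_range.mp hj
      rw [hrefl j hj', show n - (j + 1) = n - 1 - j by omega]
      ring
    rw [Finset.sum_congr rfl hTj, Finset.sum_add_distrib, Finset.mul_sum]
    abel
  · apply gp_add
    · have := gp_mul (gp_C (hM n 0)) (hgpos n)
      rwa [zero_add] at this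
    · apply gp_sum
      intro j hj
      have hj' := Finset.mem_range.mp hj
      obtain ⟨-, -, hgb, hb0⟩ := hab j hj'
      rcases Nat.eq_zero_or_pos j with rfl | hjpos
      · rw [hb0 rfl]
        simpa using gp_zero n
      · have h1 : IsGammaPos (g (n - 1 - j) * b j) ((n - 1 - j) + (j - 1)) :=
          gp_mul (hgpos _) hgb
        have h2 : IsGammaPos (X * (g (n - 1 - j) * b j)) (2 + ((n - 1 - j) + (j - 1))) :=
          gp_mul gp_X h1
        have h3 : IsGammaPos (C (M n (j + 1)) * (X * (g (n - 1 - j) * b j)))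
            (0 + (2 + ((n - 1 - j) + (j - 1)))) := gp_mul (gp_C (hM _ _)) h2
        rwa [show 0 + (2 + ((n - 1 - j) + (j - 1))) = n by omega] at h3
  · apply gp_sum
    intro j hj
    have hj' := Finset.mem_range.mp hj
    obtain ⟨-, hga, -, -⟩ := hab j hj'
    have h1 : IsGammaPos (C (M n (j + 1)) * (g (n - 1 - j) * a j)) (0 + ((n - 1 - j) + j)) :=
      gp_mul (gp_C (hM _ _)) (gp_mul (hgpos _) hga)
    rwa [show 0 + ((n - 1 - j) + j) = n - 1 by omega] at h1
  · intro hn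
    subst hn
    simp

theorem stmt15 (g : ℕ → Polynomial ℝ) (hgdeg : ∀ n, (g n).degree = (n : ℕ))
    (hgpos : ∀ n, IsGammaPos (g n) n)
    (M : ℕ → ℕ → ℝ) (hM : ∀ i j, 0 ≤ M i j)
    (f : ℕ → Polynomial ℝ) (hf0 : f 0 = 1)
    (hfrec : ∀ n, f (n + 1) =
      ∑ i ∈ Finset.range (n + 1), C (M n i) * g (n - i) * reflect i (f i)) :
    (∀ n : ℕ, ∃ a b : Polynomial ℝ,
      f (n + 1) = a + X * b ∧
      a.natDegree ≤ n ∧ reflect n a = a ∧ IsGammaPos a n ∧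
      b.natDegree ≤ n - 1 ∧ reflect (n - 1) b = b ∧ IsGammaPos b (n - 1)) ∧
    (∀ n : ℕ, ∃ m : ℕ,
      (∀ i < m, (f n).coeff i ≤ (f n).coeff (i + 1)) ∧
      (∀ i, m ≤ i → (f n).coeff (i + 1) ≤ (f n).coeff i)) := by
  have key := key_lemma g hgpos M hM f hf0 hfrec
  constructor
  · intro n
    obtain ⟨a, b, he, hga, hgb, -⟩ := key n
    exact ⟨a, b, he, gp_natDegree_le hga, gp_reflect hga, hga,
      gp_natDegree_le hgb, gp_reflect hgb, hgb⟩
  · intro n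
    cases n with
    | zero =>
      refine ⟨0, fun i hi => absurd hi (Nat.not_lt_zero i), fun i _ => ?_⟩
      rw [hf0, coeff_one, coeff_one]
      split_ifs <;> simp_all
    | succ N =>
      obtain ⟨a, b, he, hga, hgb, hb0⟩ := key N
      refine ⟨(N + 1) / 2, ?_, ?_⟩
      · intro i hi
        rw [he, coeff_add, coeff_add]
        apply add_le_add
        · exact gp_coeff_mono hga (by omega)
        · cases i with
          | zero =>
            rw [show (0 : ℕ) + 1 = 0 + 1 from rfl, coeff_X_mul]
            have : (X * b).coeff 0 = 0 := by simp [mul_coeff_zero]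
            rw [this]
            exact gp_coeff_nonneg hgb 0
          | succ i' =>
            rw [coeff_X_mul, coeff_X_mul]
            exact gp_coeff_mono hgb (by omega)
      · intro i hi
        rw [he, coeff_add, coeff_add]
        apply add_le_add
        · exact gp_coeff_anti hga (by omega)
        · cases i with
          | zero =>
            have hN : N = 0 := by omega
            rw [hb0 hN]
            simp
          | succ i' =>
            rw [coeff_X_mul, coeff_X_mul]
            exact gp_coeff_anti hgb (by omega)
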